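/- Let n ≥ 1 and let S be a finite set of n-bit strings with |S| ≤ 2^(n-1). Then there exists a balanced function g : (Fin n → ZMod 2) → ZMod 2 (taking the value 1 on exactly 2^(n-1) inputs) such that g x = 0 for all x ∈ S; since the constant-zero function also vanishes on S, no deterministic classical algorithm making at most 2^(n-1) oracle queries can distinguish a constant function from a balanced one, so 2^(n-1) + 1 queries are necessary for the exact classical solution of the Deutsch–Jozsa problem. -/

import Mathlib

/-- For `n ≥ 1` and a set `S` of at most `2^(n-1)` strings, there is a balanced
function vanishing on all of `S`; hence `2^(n-1)` classical queries cannot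
distinguish a constant function from a balanced one, and `2^(n-1) + 1` queries
are necessary for the exact classical Deutsch–Jozsa problem. -/
theorem dj_classical_lower_bound (n : ℕ) (hn : 1 ≤ n)
    (S : Finset (Fin n → ZMod 2)) (hS : S.card ≤ 2 ^ (n - 1)) :
    ∃ g : (Fin n → ZMod 2) → ZMod 2,
      (Finset.univ.filter (fun x : Fin n → ZMod 2 => g x = 1)).card = 2 ^ (n - 1) ∧
      ∀ x ∈ S, g x = 0 := by
  have hcard : Fintype.card (Fin n → ZMod 2) = 2 ^ n := by
    simp [Fintype.card_fun, ZMod.card]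
  have hcompl : 2 ^ (n - 1) ≤ Sᶜ.card := by
    have : Sᶜ.card = 2 ^ n - S.card := by
      rw [Finset.card_compl, hcard]
    rw [this]
    have h2 : 2 ^ (n - 1) + 2 ^ (n - 1) = 2 ^ n := by
      rw [← two_mul, ← pow_succ']
      congr 1
      omega
    omega
  obtain ⟨T, hTsub, hTcard⟩ := Finset.exists_subset_card_eq (s := Sᶜ) (n := 2 ^ (n - 1)) hcompl
  refine ⟨fun x => if x ∈ T then 1 else 0, ?_, ?_⟩
  · rw [← hTcard]
    congr 1
    ext x
    by_cases hx : x ∈ T <;> simp [hx]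
  · intro x hx
    have : x ∉ T := fun h => (Finset.mem_compl.mp (hTsub h)) hx
    simp [this]
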